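/- Let X_1, ..., X_k be i.i.d. Exp(1) random variables, let M = max_i X_i, and for a constant c > 0 let Z = |{i : X_i ≥ M − c}|. Then E[Z] = 1 + Σ_{i=1}^{k−1} (1 − e^{−c})^i ≤ e^c. -/

import Mathlib

open MeasureTheory ProbabilityTheory Real Set Filter Topology
open scoped ENNReal

-- CDF of Exp(1)
lemma expM_Iic (s : ℝ) :
    expMeasure 1 (Iic s) = ENNReal.ofReal (if 0 ≤ s then 1 - Real.exp (-s) else 0) := by
  have h : expMeasure 1 = volume.withDensity (exponentialPDF 1) := rfl
  rw [h, withDensity_apply _ measurableSet_Iic, lintegral_exponentialPDF_eq_antiDeriv one_pos]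
  simp

-- integrability
lemma integrable_aux (n : ℕ) (c : ℝ) (hc : 0 < c) :
    IntegrableOn (fun t : ℝ => Real.exp (-t) * (1 - Real.exp (-(t + c))) ^ n) (Ioi 0) := by
  have hb : IntegrableOn (fun x : ℝ => Real.exp (-1 * x)) (Ioi 0) :=
    exp_neg_integrableOn_Ioi 0 one_pos
  refine Integrable.mono hb ?_ ?_
  · exact (Continuous.mul (by continuity) (by continuity)).aestronglyMeasurable
  · rw [ae_restrict_iff' measurableSet_Ioi]
    refine ae_of_all _ fun t ht => ?_
    have htc : (0:ℝ) ≤ t + c := by simp at ht; linarith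
    have h1 : Real.exp (-(t + c)) ≤ 1 := Real.exp_le_one_iff.2 (by linarith)
    have h0 : (0:ℝ) < Real.exp (-(t + c)) := Real.exp_pos _
    have hg : |1 - Real.exp (-(t + c))| ≤ 1 := by
      rw [abs_le]; constructor <;> linarith
    have : |Real.exp (-t) * (1 - Real.exp (-(t + c))) ^ n| ≤ Real.exp (-t) := by
      rw [abs_mul, abs_pow]
      calc |Real.exp (-t)| * |1 - Real.exp (-(t + c))| ^ n
          ≤ |Real.exp (-t)| * 1 ^ n := by
            exact mul_le_mul_of_nonneg_left (pow_le_pow_left₀ (abs_nonneg _) hg n)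
              (abs_nonneg _)
        _ = Real.exp (-t) := by rw [one_pow, mul_one, abs_of_pos (Real.exp_pos _)]
    calc ‖Real.exp (-t) * (1 - Real.exp (-(t + c))) ^ n‖
        = |Real.exp (-t) * (1 - Real.exp (-(t + c))) ^ n| := rfl
      _ ≤ Real.exp (-t) := this
      _ = ‖Real.exp (-1 * t)‖ := by
          rw [norm_eq_abs, abs_of_pos (Real.exp_pos _), neg_mul, one_mul]

lemma integral_aux (n : ℕ) (c : ℝ) (hc : 0 < c) :
    ∫ t in Ioi (0:ℝ), Real.exp (-t) * (1 - Real.exp (-(t + c))) ^ n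
      = Real.exp c / (n + 1) * (1 - (1 - Real.exp (-c)) ^ (n + 1)) := by
  set F : ℝ → ℝ := fun t => Real.exp c / (n + 1) * (1 - Real.exp (-(t + c))) ^ (n + 1) with hF
  have hn1 : ((n:ℝ) + 1) ≠ 0 := by positivity
  have hderiv : ∀ t : ℝ, HasDerivAt F (Real.exp (-t) * (1 - Real.exp (-(t + c))) ^ n) t := by
    intro t
    have h1 : HasDerivAt (fun t : ℝ => -(t + c)) (-1) t := by
      exact ((hasDerivAt_id t).add_const c).neg
    have h2 : HasDerivAt (fun t : ℝ => Real.exp (-(t + c))) (-Real.exp (-(t + c))) t := by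
      simpa using h1.exp
    have h3 : HasDerivAt (fun t : ℝ => 1 - Real.exp (-(t + c))) (Real.exp (-(t + c))) t := by
      simpa using h2.const_sub 1
    have h4 := (h3.pow (n + 1)).const_mul (Real.exp c / (n + 1))
    refine h4.congr_deriv ?_
    have hh : Real.exp c * Real.exp (-(t + c)) = Real.exp (-t) := by
      rw [← Real.exp_add]; ring_nf
    rw [Nat.add_sub_cancel, ← hh]
    push_cast
    field_simp
  have htend : Tendsto F atTop (𝓝 (Real.exp c / (n + 1))) := by
    have h0 : Tendsto (fun t : ℝ => -(t + c)) atTop atBot := by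
      apply tendsto_neg_atBot_iff.mpr
      exact tendsto_atTop_add_const_right _ c tendsto_id
    have h1 : Tendsto (fun t : ℝ => Real.exp (-(t + c))) atTop (𝓝 0) :=
      Real.tendsto_exp_atBot.comp h0
    have h2 := (((tendsto_const_nhds (x := (1:ℝ))).sub h1).pow (n + 1)).const_mul
      (Real.exp c / (n + 1))
    simp only [sub_zero, one_pow, mul_one] at h2
    exact h2
  have := integral_Ioi_of_hasDerivAt_of_tendsto' (f := F)
    (f' := fun t => Real.exp (-t) * (1 - Real.exp (-(t + c))) ^ n)
    (fun t _ => hderiv t) (integrable_aux n c hc) htend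
  rw [this, hF]
  simp only [zero_add]
  ring

lemma measurable_exponentialPDF' (r : ℝ) : Measurable (exponentialPDF r) := by
  unfold exponentialPDF
  exact (measurable_exponentialPDFReal r).ennreal_ofReal

lemma measure_pi_event (n : ℕ) (i : Fin (n + 1)) (c : ℝ) (hc : 0 < c) :
    Measure.pi (fun _ : Fin (n + 1) => expMeasure 1)
        {x : Fin (n + 1) → ℝ | ∀ j, x j ≤ x i + c}
      = ENNReal.ofReal
          (∫ t in Ioi (0:ℝ), Real.exp (-t) * (1 - Real.exp (-(t + c))) ^ n) := by
  haveI : IsProbabilityMeasure (expMeasure 1) := isProbabilityMeasure_expMeasure one_pos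
  set ν := expMeasure 1 with hν
  set e := MeasurableEquiv.piFinSuccAbove (fun _ : Fin (n + 1) => ℝ) i with he
  have hmp := measurePreserving_piFinSuccAbove (fun _ : Fin (n + 1) => ν) i
  set T : Set (ℝ × (Fin n → ℝ)) := {p | ∀ j, p.2 j ≤ p.1 + c} with hT
  have hTmeas : MeasurableSet T := by
    have : T = ⋂ j : Fin n, {p : ℝ × (Fin n → ℝ) | p.2 j ≤ p.1 + c} := by
      ext p; simp [hT, Set.mem_iInter]
    rw [this]
    exact MeasurableSet.iInter fun j =>
      measurableSet_le (measurable_snd.eval) (measurable_fst.add_const c)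
  have hSpre : {x : Fin (n + 1) → ℝ | ∀ j, x j ≤ x i + c} = e ⁻¹' T := by
    ext x
    simp only [Set.mem_preimage, Set.mem_setOf_eq, he, hT,
      MeasurableEquiv.piFinSuccAbove_apply]
    rw [Fin.forall_iff_succAbove i]
    constructor
    · rintro ⟨_, h⟩ j; exact h j
    · intro h
      exact ⟨by linarith, fun j => h j⟩
  rw [hSpre, hmp.measure_preimage hTmeas.nullMeasurableSet]
  rw [Measure.prod_apply hTmeas]
  have hslice : ∀ t : ℝ, (Prod.mk t ⁻¹' T) = Set.pi Set.univ (fun _ : Fin n => Iic (t + c)) := by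
    intro t; ext y; simp only [hT, Set.mem_preimage, Set.mem_setOf_eq, Set.mem_pi,
      Set.mem_univ, Set.mem_Iic, forall_true_left, true_implies]
  have hstep : ∀ t : ℝ, Measure.pi (fun _ : Fin n => ν) (Prod.mk t ⁻¹' T)
      = ENNReal.ofReal (if 0 ≤ t + c then 1 - Real.exp (-(t + c)) else 0) ^ n := by
    intro t
    rw [hslice t, Measure.pi_pi]
    simp [hν, expM_Iic, Finset.prod_const]
  simp only [hstep]
  -- now lintegral over ν
  have hνd : ν = volume.withDensity (exponentialPDF 1) := rfl
  have hgmeas : Measurable (fun t : ℝ =>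
      ENNReal.ofReal (if 0 ≤ t + c then 1 - Real.exp (-(t + c)) else 0) ^ n) := by
    apply Measurable.pow_const
    apply Measurable.ennreal_ofReal
    exact Measurable.ite (measurableSet_le measurable_const (measurable_id.add_const c))
      (by fun_prop) measurable_const
  rw [hνd, lintegral_withDensity_eq_lintegral_mul _ (measurable_exponentialPDF' _) hgmeas]
  simp only [Pi.mul_apply]
  set F : ℝ → ℝ≥0∞ := fun t => exponentialPDF 1 t *
      ENNReal.ofReal (if 0 ≤ t + c then 1 - Real.exp (-(t + c)) else 0) ^ n with hFdef
  have hsplit : ∫⁻ t, F t = (∫⁻ t in Iio (0:ℝ), F t) + ∫⁻ t in Ici (0:ℝ), F t := by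
    rw [← lintegral_add_compl F measurableSet_Iio, compl_Iio]
  have hneg : ∫⁻ t in Iio (0:ℝ), F t = 0 := by
    rw [setLIntegral_congr_fun measurableSet_Iio
      (fun t (ht : t < 0) => by
        show F t = 0
        rw [hFdef]; simp [exponentialPDF_of_neg ht]), lintegral_zero]
  have hIci : ∫⁻ t in Ici (0:ℝ), F t = ∫⁻ t in Ioi (0:ℝ), F t :=
    (setLIntegral_congr (Ioi_ae_eq_Ici (a := (0:ℝ)))).symm
  have hpos : ∫⁻ t in Ioi (0:ℝ), F t
      = ∫⁻ t in Ioi (0:ℝ),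
          ENNReal.ofReal (Real.exp (-t) * (1 - Real.exp (-(t + c))) ^ n) := by
    refine setLIntegral_congr_fun measurableSet_Ioi (fun t (ht : 0 < t) => ?_)
    have htc : (0:ℝ) ≤ t + c := by linarith
    have hle : Real.exp (-(t + c)) ≤ 1 := Real.exp_le_one_iff.2 (by linarith)
    rw [hFdef]
    show exponentialPDF 1 t * _ = _
    rw [exponentialPDF_of_nonneg ht.le, if_pos htc,
      ENNReal.ofReal_mul (Real.exp_pos (-t)).le,
      ENNReal.ofReal_pow (by linarith : (0:ℝ) ≤ 1 - Real.exp (-(t + c)))]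
    norm_num
  rw [hsplit, hneg, hIci, hpos, zero_add,
    ← ofReal_integral_eq_lintegral_ofReal (integrable_aux n c hc)
      ((ae_restrict_iff' measurableSet_Ioi).2 (ae_of_all _ fun t (ht : 0 < t) => by
        have hle : Real.exp (-(t + c)) ≤ 1 := Real.exp_le_one_iff.2 (by linarith)
        have : (0:ℝ) ≤ 1 - Real.exp (-(t + c)) := by linarith
        positivity))]

lemma map_eq_pi {Ω : Type*} [MeasureSpace Ω] [IsProbabilityMeasure (ℙ : Measure Ω)]
    (k : ℕ) (X : Fin k → Ω → ℝ) (hmeas : ∀ i, Measurable (X i))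
    (hindep : iIndepFun X ℙ)
    (hdist : ∀ i, Measure.map (X i) ℙ = expMeasure 1) :
    Measure.map (fun ω (i : Fin k) => X i ω) ℙ = Measure.pi fun _ => expMeasure 1 := by
  haveI : IsProbabilityMeasure (expMeasure 1) := isProbabilityMeasure_expMeasure one_pos
  refine (Measure.pi_eq (μ := fun _ : Fin k => expMeasure 1) fun s hs => ?_).symm
  have hT : Measurable (fun ω (i : Fin k) => X i ω) := measurable_pi_lambda _ hmeas
  rw [Measure.map_apply hT (MeasurableSet.univ_pi hs)]
  have hpre : (fun ω (i : Fin k) => X i ω) ⁻¹' (Set.pi univ s)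
      = ⋂ i ∈ Finset.univ, X i ⁻¹' s i := by
    ext ω; simp [Set.mem_pi]
  rw [hpre, hindep.measure_inter_preimage_eq_mul Finset.univ (fun i _ => hs i)]
  exact Finset.prod_congr rfl fun i _ => by
    rw [← hdist i, Measure.map_apply (hmeas i) (hs i)]

/-- For `k` i.i.d. `Exp(1)` random variables, the expected number of samples within
an additive `c` of the maximum equals `1 + Σ_{i=1}^{k-1} (1 - e^{-c})^i ≤ e^c`. -/
theorem stmt6 {Ω : Type*} [MeasureSpace Ω] [IsProbabilityMeasure (ℙ : Measure Ω)]
    (k : ℕ) (hk : 0 < k)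
    (X : Fin k → Ω → ℝ) (hmeas : ∀ i, Measurable (X i))
    (hindep : iIndepFun X ℙ)
    (hdist : ∀ i, Measure.map (X i) ℙ = expMeasure 1)
    (c : ℝ) (hc : 0 < c) :
    (∫ ω, ((Finset.univ.filter
        (fun i : Fin k => (⨆ j, X j ω) - c ≤ X i ω)).card : ℝ))
      = 1 + ∑ i ∈ Finset.Icc 1 (k - 1), (1 - Real.exp (-c)) ^ i ∧
    1 + ∑ i ∈ Finset.Icc 1 (k - 1), (1 - Real.exp (-c)) ^ i ≤ Real.exp c := by
  haveI : IsProbabilityMeasure (expMeasure 1) := isProbabilityMeasure_expMeasure one_pos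
  haveI hne : Nonempty (Fin k) := ⟨⟨0, hk⟩⟩
  obtain ⟨n, rfl⟩ : ∃ n, k = n + 1 := ⟨k - 1, by omega⟩
  set r := 1 - Real.exp (-c) with hr
  set I := ∫ t in Ioi (0:ℝ), Real.exp (-t) * (1 - Real.exp (-(t + c))) ^ n with hIdef
  set A : Fin (n + 1) → Set Ω := fun i => {ω | ∀ j, X j ω ≤ X i ω + c} with hA
  have hAmeas : ∀ i, MeasurableSet (A i) := by
    intro i
    have : A i = ⋂ j, {ω | X j ω ≤ X i ω + c} := by ext; simp [hA, Set.mem_iInter]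
    rw [this]
    exact MeasurableSet.iInter fun j => measurableSet_le (hmeas j) ((hmeas i).add_const c)
  have hcond : ∀ (ω : Ω) (i), ((⨆ j, X j ω) - c ≤ X i ω) ↔ ω ∈ A i := by
    intro ω i
    rw [sub_le_iff_le_add, ciSup_le_iff (Set.Finite.bddAbove (Set.finite_range fun j => X j ω))]
    exact Iff.rfl
  -- rewrite integrand
  have hint : ∀ ω : Ω, ((Finset.univ.filter
      (fun i : Fin (n + 1) => (⨆ j, X j ω) - c ≤ X i ω)).card : ℝ)
      = ∑ i : Fin (n + 1), (A i).indicator (fun _ => (1:ℝ)) ω := by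
    intro ω
    rw [Finset.card_filter]
    push_cast
    refine Finset.sum_congr rfl fun i _ => ?_
    by_cases h : ω ∈ A i
    · rw [if_pos ((hcond ω i).2 h), Set.indicator_of_mem h]
    · rw [if_neg (fun hx => h ((hcond ω i).1 hx)), Set.indicator_of_notMem h]
  have hInt : ∀ i, Integrable ((A i).indicator (fun _ => (1:ℝ))) ℙ :=
    fun i => (integrable_const 1).indicator (hAmeas i)
  -- probability of each event
  have hT : Measurable (fun ω (i : Fin (n + 1)) => X i ω) := measurable_pi_lambda _ hmeas
  have hAi : ∀ i, ℙ (A i) = ENNReal.ofReal I := by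
    intro i
    have hSmeas : MeasurableSet {x : Fin (n + 1) → ℝ | ∀ j, x j ≤ x i + c} := by
      have : {x : Fin (n + 1) → ℝ | ∀ j, x j ≤ x i + c}
          = ⋂ j, {x : Fin (n + 1) → ℝ | x j ≤ x i + c} := by
        ext; simp [Set.mem_iInter]
      rw [this]
      exact MeasurableSet.iInter fun j =>
        measurableSet_le (measurable_pi_apply j) (by fun_prop)
    have hpre : A i = (fun ω (j : Fin (n + 1)) => X j ω)
        ⁻¹' {x : Fin (n + 1) → ℝ | ∀ j, x j ≤ x i + c} := by
      ext ω; simp [hA]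
    rw [hpre, ← Measure.map_apply hT hSmeas,
      map_eq_pi (n + 1) X hmeas hindep hdist, measure_pi_event n i c hc]
  -- numeric facts
  have hexpneg_pos : 0 < Real.exp (-c) := Real.exp_pos _
  have hexpneg_lt : Real.exp (-c) < 1 := by
    rw [Real.exp_lt_one_iff]; linarith
  have hr0 : 0 ≤ r := by rw [hr]; linarith
  have hr1 : r < 1 := by rw [hr]; linarith
  have hrpow : r ^ (n + 1) ≤ 1 := pow_le_one₀ hr0 hr1.le
  have hI : I = Real.exp c / (n + 1) * (1 - r ^ (n + 1)) := integral_aux n c hc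
  have hI0 : 0 ≤ I := by
    rw [hI]
    have : (0:ℝ) < Real.exp c := Real.exp_pos c
    have hn : (0:ℝ) < (n:ℝ) + 1 := by positivity
    apply mul_nonneg (by positivity)
    linarith
  -- compute the expectation
  have hexp : (∫ ω, ((Finset.univ.filter
      (fun i : Fin (n + 1) => (⨆ j, X j ω) - c ≤ X i ω)).card : ℝ))
      = ((n : ℝ) + 1) * I := by
    calc (∫ ω, ((Finset.univ.filter
        (fun i : Fin (n + 1) => (⨆ j, X j ω) - c ≤ X i ω)).card : ℝ))
        = ∫ ω, ∑ i : Fin (n + 1), (A i).indicator (fun _ => (1:ℝ)) ω := by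
          exact integral_congr_ae (ae_of_all _ hint)
      _ = ∑ i : Fin (n + 1), ∫ ω, (A i).indicator (fun _ => (1:ℝ)) ω ∂ℙ :=
          integral_finset_sum _ fun i _ => hInt i
      _ = ∑ i : Fin (n + 1), (ℙ (A i)).toReal := by
          refine Finset.sum_congr rfl fun i _ => ?_
          rw [integral_indicator_const (1:ℝ) (hAmeas i), smul_eq_mul, mul_one]; rfl
      _ = ∑ i : Fin (n + 1), I := by
          refine Finset.sum_congr rfl fun i _ => ?_
          rw [hAi i, ENNReal.toReal_ofReal hI0]
      _ = ((n : ℝ) + 1) * I := by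
          rw [Finset.sum_const, Finset.card_univ, Fintype.card_fin, nsmul_eq_mul]
          push_cast; ring
  -- geometric sum identity
  have hsum : ((n : ℝ) + 1) * I = 1 + ∑ i ∈ Finset.Icc 1 (n + 1 - 1), r ^ i := by
    have hrange : Finset.range (n + 1) = insert 0 (Finset.Icc 1 (n + 1 - 1)) := by
      ext x; simp; omega
    have hgeom : ∑ i ∈ Finset.range (n + 1), r ^ i = (r ^ (n + 1) - 1) / (r - 1) :=
      geom_sum_eq (by linarith) (n + 1)
    have h1 : 1 + ∑ i ∈ Finset.Icc 1 (n + 1 - 1), r ^ i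
        = ∑ i ∈ Finset.range (n + 1), r ^ i := by
      rw [hrange, Finset.sum_insert (by simp), pow_zero]
    rw [h1, hgeom, hI]
    have h2 : r - 1 = -Real.exp (-c) := by rw [hr]; ring
    have h3 : Real.exp c * Real.exp (-c) = 1 := by
      rw [← Real.exp_add]; simp
    rw [h2]
    have hn : ((n:ℝ) + 1) ≠ 0 := by positivity
    field_simp
    nlinarith [h3]
  refine ⟨by rw [hexp, hsum], ?_⟩
  rw [← hsum, hI]
  have hn : (0:ℝ) < (n:ℝ) + 1 := by positivity
  have hrpow0 : 0 ≤ r ^ (n + 1) := pow_nonneg hr0 _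
  have : ((n:ℝ) + 1) * (Real.exp c / (n + 1) * (1 - r ^ (n + 1)))
      = Real.exp c * (1 - r ^ (n + 1)) := by field_simp
  rw [this]
  nlinarith [Real.exp_pos c]
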